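/- Let $\gamma, \lambda \in \mathbb{R}$ with $|\gamma + 2\lambda| < 1$, and let $\alpha = (3+\gamma)/2$. Then the integral $G(\alpha) = \int_0^1 \int_{1-y}^{\infty} (y^{\gamma+\lambda} z^{-\lambda} + z^{\gamma+\lambda} y^{-\lambda})\, y^{1-\alpha} z^{-\alpha}\, dz\, dy$ is finite. -/

import Mathlib

open MeasureTheory Set

lemma beta_integrable {p q : ℝ} (hp : -1 < p) (hq : -1 < q) :
    IntegrableOn (fun y : ℝ => y ^ p * (1 - y) ^ q) (Set.Ioo 0 1) := by
  have h1 : IntervalIntegrable (fun x : ℝ =>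
      (x : ℂ) ^ (((p + 1 : ℝ) : ℂ) - 1) * (1 - (x : ℂ)) ^ (((q + 1 : ℝ) : ℂ) - 1))
      volume 0 1 :=
    Complex.betaIntegral_convergent (by simp; linarith) (by simp; linarith)
  have h2 := h1.norm
  rw [intervalIntegrable_iff_integrableOn_Ioo_of_le zero_le_one] at h2
  apply h2.congr_fun ?_ measurableSet_Ioo
  intro x hx
  have hx1 : (0:ℝ) < x := hx.1
  have hx2 : (0:ℝ) < 1 - x := by linarith [hx.2]
  have e1 : ((p + 1 : ℝ) : ℂ) - 1 = (p : ℂ) := by push_cast; ring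
  have e2 : ((q + 1 : ℝ) : ℂ) - 1 = (q : ℂ) := by push_cast; ring
  have e3 : (1 - (x : ℂ)) = ((1 - x : ℝ) : ℂ) := by push_cast; ring
  simp only [e1, e2, e3, norm_mul]
  rw [Complex.norm_cpow_eq_rpow_re_of_pos hx1,
    Complex.norm_cpow_eq_rpow_re_of_pos hx2]
  simp

theorem stmt_3 (γ lam : ℝ) (h : |γ + 2 * lam| < 1) :
    (∫⁻ y in Set.Ioo (0:ℝ) 1, ∫⁻ z in Set.Ioi (1 - y),
      ENNReal.ofReal ((y ^ (γ + lam) * z ^ (-lam) + z ^ (γ + lam) * y ^ (-lam)) *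
        y ^ (1 - (3 + γ) / 2) * z ^ (-((3 + γ) / 2)))) ≠ ⊤ := by
  rw [abs_lt] at h
  set α : ℝ := (3 + γ) / 2 with hα
  set A : ℝ := -lam - α with hAdef
  set B : ℝ := γ + lam - α with hBdef
  have hA : A < -1 := by rw [hAdef, hα]; linarith
  have hB : B < -1 := by rw [hBdef, hα]; linarith
  set g : ℝ → ℝ := fun y => y ^ (γ + lam + 1 - α) * (1 - y) ^ (A + 1) * (-(1 / (A + 1)))
      + y ^ (1 - α - lam) * (1 - y) ^ (B + 1) * (-(1 / (B + 1))) with hg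
  have key : ∀ᵐ y ∂(volume : Measure ℝ), y ∈ Set.Ioo (0:ℝ) 1 →
      (∫⁻ z in Set.Ioi (1 - y),
        ENNReal.ofReal ((y ^ (γ + lam) * z ^ (-lam) + z ^ (γ + lam) * y ^ (-lam)) *
          y ^ (1 - α) * z ^ (-α))) = ENNReal.ofReal (g y) := by
    refine Filter.Eventually.of_forall fun y hy => ?_
    have hy0 : 0 < y := hy.1
    have hy1 : 0 < 1 - y := by linarith [hy.2]
    -- rewrite the integrand
    have step1 : (∫⁻ z in Set.Ioi (1 - y),
        ENNReal.ofReal ((y ^ (γ + lam) * z ^ (-lam) + z ^ (γ + lam) * y ^ (-lam)) *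
          y ^ (1 - α) * z ^ (-α)))
        = ∫⁻ z in Set.Ioi (1 - y),
        ENNReal.ofReal (y ^ (γ + lam + 1 - α) * z ^ A + y ^ (1 - α - lam) * z ^ B) := by
      refine setLIntegral_congr_fun_ae measurableSet_Ioi
        (Filter.Eventually.of_forall fun z hz => ?_)
      have hz0 : 0 < z := lt_trans hy1 hz
      congr 1
      have ey1 : y ^ (γ + lam + 1 - α) = y ^ (γ + lam) * y ^ (1 - α) := by
        rw [show γ + lam + 1 - α = (γ + lam) + (1 - α) by ring, Real.rpow_add hy0]
      have ez1 : z ^ A = z ^ (-lam) * z ^ (-α) := by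
        rw [hAdef, show -lam - α = (-lam) + (-α) by ring, Real.rpow_add hz0]
      have ey2 : y ^ (1 - α - lam) = y ^ (-lam) * y ^ (1 - α) := by
        rw [show (1 : ℝ) - α - lam = (-lam) + (1 - α) by ring, Real.rpow_add hy0]
      have ez2 : z ^ B = z ^ (γ + lam) * z ^ (-α) := by
        rw [hBdef, show γ + lam - α = (γ + lam) + (-α) by ring, Real.rpow_add hz0]
      rw [ey1, ez1, ey2, ez2]
      set a1 := y ^ (γ + lam); set a2 := z ^ (-lam); set a3 := y ^ (-lam)
      set a4 := z ^ (γ + lam); set a5 := y ^ (1 - α); set a6 := z ^ (-α)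
      ring
    rw [step1]
    have hiA : IntegrableOn (fun z : ℝ => z ^ A) (Set.Ioi (1 - y)) :=
      integrableOn_Ioi_rpow_of_lt hA hy1
    have hiB : IntegrableOn (fun z : ℝ => z ^ B) (Set.Ioi (1 - y)) :=
      integrableOn_Ioi_rpow_of_lt hB hy1
    have hint : IntegrableOn
        (fun z : ℝ => y ^ (γ + lam + 1 - α) * z ^ A + y ^ (1 - α - lam) * z ^ B)
        (Set.Ioi (1 - y)) := (hiA.const_mul _).add (hiB.const_mul _)
    have hnn : 0 ≤ᵐ[volume.restrict (Set.Ioi (1 - y))]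
        (fun z : ℝ => y ^ (γ + lam + 1 - α) * z ^ A + y ^ (1 - α - lam) * z ^ B) := by
      filter_upwards [ae_restrict_mem measurableSet_Ioi] with z hz
      have hz0 : (0:ℝ) < z := lt_trans hy1 hz
      positivity
    rw [← ofReal_integral_eq_lintegral_ofReal hint hnn]
    congr 1
    rw [integral_add (hiA.const_mul _) (hiB.const_mul _), integral_const_mul, integral_const_mul,
      integral_Ioi_rpow_of_lt hA hy1, integral_Ioi_rpow_of_lt hB hy1, hg]
    have h1 : A + 1 ≠ 0 := by intro hc; rw [show A = -1 by linarith] at hA; linarith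
    have h2 : B + 1 ≠ 0 := by intro hc; rw [show B = -1 by linarith] at hB; linarith
    field_simp
  rw [setLIntegral_congr_fun_ae measurableSet_Ioo key]
  have hp1 : (-1:ℝ) < γ + lam + 1 - α := by rw [hα]; linarith
  have hq1 : (-1:ℝ) < A + 1 := by rw [hAdef, hα]; linarith
  have hp2 : (-1:ℝ) < 1 - α - lam := by rw [hα]; linarith
  have hq2 : (-1:ℝ) < B + 1 := by rw [hBdef, hα]; linarith
  have hint : IntegrableOn g (Set.Ioo (0:ℝ) 1) := by
    rw [hg]
    exact ((beta_integrable hp1 hq1).mul_const _).add ((beta_integrable hp2 hq2).mul_const _)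
  exact hint.setLIntegral_lt_top.ne
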